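/- arXiv:2510.12760 — 4 statements merged into one kernel-verified Lean document; each statement's English description precedes it below -/
import Mathlib

section
/- Let r ≥ 3 be an integer, k a real number, and let λ₁, λ₂ be positive real numbers with λ₁ > r − 2 and λ₂ = (r − 1)/(λ₁ − r + 2). Define f : ℝʳ → ℝ by f(z₁, …, z_r) = λ₁ Σ_{i=1}^{r−1} z_i² + λ₂ z_r² − 2 Σ_{1 ≤ i < j ≤ r} z_i z_j. Then for every (z₁, …, z_r) ∈ ℝʳ with z₁ + ⋯ + z_r = k one has f(z₁, …, z_r) ≥ 0, and f(z₁, …, z_r) = 0 if and only if z₁ = ⋯ = z_{r−1} = k/(λ₁ + 1) and z_r = k(λ₁ − r + 2)/(λ₁ + 1). In particular, the constrained minimization problem min f over the hyperplane {z ∈ ℝʳ : z₁ + ⋯ + z_r = k} has global minimum value 0, attained exactly at this point. -/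
open Finset

lemma sq_sum_eq' (n : ℕ) (z : ℕ → ℝ) :
    (∑ i ∈ range n, z i)^2
      = ∑ i ∈ range n, (z i)^2 + 2 * ∑ j ∈ range n, ∑ i ∈ range j, z i * z j := by
  induction n with
  | zero => simp
  | succ n ih =>
    rw [sum_range_succ, sum_range_succ, sum_range_succ, ← Finset.sum_mul]
    linear_combination ih

lemma var_decomp' (n : ℕ) (hn : (n:ℝ) ≠ 0) (z : ℕ → ℝ) :
    ∑ i ∈ range n, (z i - (∑ j ∈ range n, z j)/n)^2
      = ∑ i ∈ range n, (z i)^2 - (∑ j ∈ range n, z j)^2 / n := by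
  have h : ∀ i ∈ range n, (z i - (∑ j ∈ range n, z j)/n)^2
      = (z i)^2 - (2*(∑ j ∈ range n, z j)/n) * z i + ((∑ j ∈ range n, z j)/n)^2 := by
    intros; ring
  rw [sum_congr rfl h, sum_add_distrib, sum_sub_distrib, sum_const, card_range,
    ← mul_sum]
  field_simp
  have hnn : (n:ℝ)^2 * (n:ℝ)⁻¹^2 = 1 := by rw [← mul_pow, mul_inv_cancel₀ hn, one_pow]
  linear_combination (∑ j ∈ range n, z j)^2 * hnn

/-- Tripathi's constrained-extremum lemma: the quadratic form
`f(z) = λ₁ ∑_{i=1}^{r-1} z_i² + λ₂ z_r² − 2 ∑_{1≤i<j≤r} z_i z_j`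
is nonnegative on the hyperplane `z₁ + ⋯ + z_r = k` when
`λ₂ = (r−1)/(λ₁ − r + 2)`, and vanishes exactly at the indicated point. -/
theorem tripathi_constrained_extremum
    (r : ℕ) (hr : 3 ≤ r) (k : ℝ) (l1 l2 : ℝ)
    (hl1 : 0 < l1) (hl2 : 0 < l2)
    (hl1' : (r : ℝ) - 2 < l1)
    (hl2' : l2 = ((r : ℝ) - 1) / (l1 - (r : ℝ) + 2))
    (z : ℕ → ℝ) (hz : ∑ i ∈ Finset.range r, z i = k) :
    0 ≤ l1 * (∑ i ∈ Finset.range (r - 1), (z i) ^ 2) + l2 * (z (r - 1)) ^ 2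
        - 2 * ∑ j ∈ Finset.range r, ∑ i ∈ Finset.range j, z i * z j
    ∧ (l1 * (∑ i ∈ Finset.range (r - 1), (z i) ^ 2) + l2 * (z (r - 1)) ^ 2
        - 2 * ∑ j ∈ Finset.range r, ∑ i ∈ Finset.range j, z i * z j = 0
      ↔ (∀ i < r - 1, z i = k / (l1 + 1))
        ∧ z (r - 1) = k * (l1 - (r : ℝ) + 2) / (l1 + 1)) := by
  have hr1 : 1 ≤ r := by omega
  have hcast : ((r - 1 : ℕ) : ℝ) = (r:ℝ) - 1 := by
    push_cast [Nat.cast_sub hr1]; ring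
  set ρ : ℝ := (r:ℝ) - 1 with hρdef
  set d : ℝ := l1 - (r:ℝ) + 2 with hddef
  have hρpos : 0 < ρ := by
    have : (3:ℝ) ≤ (r:ℝ) := by exact_mod_cast hr
    simp only [hρdef]; linarith
  have hdpos : 0 < d := by simp only [hddef]; linarith
  have hρne : ρ ≠ 0 := ne_of_gt hρpos
  have hdne : d ≠ 0 := ne_of_gt hdpos
  have hl1p : (0:ℝ) < l1 + 1 := by linarith
  have hl1ne : l1 + 1 ≠ 0 := ne_of_gt hl1p
  set t : ℝ := z (r - 1) with htdef
  set s : ℝ := ∑ i ∈ range (r-1), z i with hsdef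
  set A : ℝ := ∑ i ∈ range (r-1), (z i)^2 with hAdef
  set Q : ℝ := ∑ i ∈ range (r-1), (z i - s/ρ)^2 with hQdef
  have hrr : r = (r - 1) + 1 := by omega
  have hst : s + t = k := by
    rw [hrr, sum_range_succ] at hz; exact hz
  -- h1 : (s+t)^2 = A + t^2 + 2*D
  have h1 : (s + t)^2 = A + t^2
      + 2 * ∑ j ∈ range r, ∑ i ∈ range j, z i * z j := by
    have := sq_sum_eq' r z
    rw [hrr, sum_range_succ (fun i => z i), sum_range_succ (fun i => (z i)^2)] at this
    rw [← hrr] at this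
    exact this
  -- h2 : Q = A - s^2/ρ
  have h2 : Q = A - s^2 / ρ := by
    have := var_decomp' (r-1) (by rw [hcast]; exact hρne) z
    rw [hcast] at this
    exact this
  set D : ℝ := ∑ j ∈ range r, ∑ i ∈ range j, z i * z j with hDdef
  have key : l1 * A + l2 * t^2 - 2 * D
      = (l1 + 1) * Q + (d*s - ρ*t)^2 / (ρ*d) := by
    rw [h2, hl2']
    have h2D : 2 * D = (s+t)^2 - A - t^2 := by linarith [h1]
    rw [h2D]
    have hl1eq : l1 = d + ρ - 1 := by simp only [hddef, hρdef]; ring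
    rw [hl1eq]
    field_simp
    ring
  have hQnonneg : 0 ≤ Q := Finset.sum_nonneg fun i _ => sq_nonneg _
  clear_value t s A Q D ρ d
  constructor
  · rw [key]
    have : 0 ≤ (d*s - ρ*t)^2 / (ρ*d) := by positivity
    nlinarith
  · rw [key]
    constructor
    · intro h0
      have hP : 0 ≤ (d*s - ρ*t)^2 / (ρ*d) :=
        div_nonneg (sq_nonneg _) (le_of_lt (mul_pos hρpos hdpos))
      have hQ' : 0 ≤ (l1+1) * Q := mul_nonneg (le_of_lt hl1p) hQnonneg
      have hterm : (l1+1) * Q = 0 ∧ (d*s - ρ*t)^2 / (ρ*d) = 0 :=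
        ⟨by linarith, by linarith⟩
      have hQ0 : Q = 0 := by
        rcases hterm with ⟨h, _⟩
        exact (mul_eq_zero.mp h).resolve_left hl1ne
      have hcross : d*s - ρ*t = 0 := by
        rcases hterm with ⟨_, h⟩
        have := (div_eq_zero_iff.mp h).resolve_right (mul_ne_zero hρne hdne)
        exact pow_eq_zero_iff (by norm_num) |>.mp this
      -- from d*s = ρ*t and s+t=k : s = ρ*k/(l1+1), t = d*k/(l1+1)
      have hl1eq : l1 + 1 = d + ρ := by simp only [hddef, hρdef]; ring
      have hs' : s * (d + ρ) = ρ * k := by linear_combination hcross + ρ * hst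
      have ht'' : t * (d + ρ) = d * k := by linear_combination d * hst - hcross
      have hs : s = ρ * k / (l1 + 1) := by
        rw [eq_div_iff hl1ne, hl1eq]; linear_combination hs'
      have ht : t = k * d / (l1 + 1) := by
        rw [eq_div_iff hl1ne, hl1eq]; linear_combination ht''
      constructor
      · intro i hi
        rw [hQdef] at hQ0
        have hzi : z i - s/ρ = 0 := by
          have := (Finset.sum_eq_zero_iff_of_nonneg
            (fun j (_ : j ∈ range (r-1)) => sq_nonneg (z j - s/ρ))).mp hQ0 i
            (mem_range.mpr hi)
          exact pow_eq_zero_iff (by norm_num) |>.mp this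
        have : z i = s / ρ := by linarith
        rw [this, hs]
        field_simp
      · exact ht
    · rintro ⟨hzi, ht⟩
      have hs : s = ρ * k / (l1 + 1) := by
        rw [hsdef]
        rw [Finset.sum_congr rfl (fun i hi => hzi i (mem_range.mp hi))]
        rw [sum_const, card_range, nsmul_eq_mul, hcast, mul_div_assoc]
      have hQ0 : Q = 0 := by
        rw [hQdef]
        apply Finset.sum_eq_zero
        intro i hi
        rw [hzi i (mem_range.mp hi), hs]
        have : ρ * k / (l1 + 1) / ρ = k / (l1+1) := by field_simp
        rw [this]
        ring
      have ht' : t = k * d / (l1 + 1) := ht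
      rw [hQ0, hs, ht']
      field_simp
      ring
end

section
/- Let r ≥ 3 be an integer and b₁, …, b_r real numbers. Then ((2r − 3)/2) Σ_{i=1}^{r−1} b_i² + 2(r − 1) b_r² − 2 Σ_{1 ≤ i < j ≤ r} b_i b_j ≥ 0, with equality if and only if b₁ = b₂ = ⋯ = b_{r−1} = 2 b_r. -/
lemma casorati_key_sum (f : ℕ → ℝ) :
    ∀ n : ℕ, ∑ j ∈ Finset.range n, ∑ i ∈ Finset.range j, (f i + f j)
      = ((n : ℝ) - 1) * ∑ i ∈ Finset.range n, f i := by
  intro n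
  induction n with
  | zero => simp
  | succ n ih =>
    rw [Finset.sum_range_succ, ih, Finset.sum_add_distrib, Finset.sum_const,
      Finset.sum_range_succ (f := f)]
    simp only [Finset.card_range, nsmul_eq_mul]
    push_cast
    ring

/-- The quadratic inequality (instance `λ₁ = (2r−3)/2`, `λ₂ = 2(r−1)`) used in the proof of
the second (supremum) Casorati inequality of Theorem 2.1. -/
theorem casorati_quadratic_sup
    (r : ℕ) (hr : 3 ≤ r) (b : ℕ → ℝ) :
    0 ≤ ((2 * (r : ℝ) - 3) / 2) * (∑ i ∈ Finset.range (r - 1), (b i) ^ 2)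
        + 2 * ((r : ℝ) - 1) * (b (r - 1)) ^ 2
        - 2 * ∑ j ∈ Finset.range r, ∑ i ∈ Finset.range j, b i * b j
    ∧ (((2 * (r : ℝ) - 3) / 2) * (∑ i ∈ Finset.range (r - 1), (b i) ^ 2)
        + 2 * ((r : ℝ) - 1) * (b (r - 1)) ^ 2
        - 2 * ∑ j ∈ Finset.range r, ∑ i ∈ Finset.range j, b i * b j = 0
      ↔ ∀ i < r - 1, b i = 2 * b (r - 1)) := by
  obtain ⟨n, rfl⟩ : ∃ n, r = n + 1 := ⟨r - 1, by omega⟩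
  have hn : n + 1 - 1 = n := rfl
  set P : ℝ := ∑ j ∈ Finset.range n, ∑ i ∈ Finset.range j, (b i - b j) ^ 2 with hPdef
  set Z : ℝ := ∑ i ∈ Finset.range n, (b i - 2 * b n) ^ 2 with hZdef
  have hP : P = ((n : ℝ) - 1) * (∑ i ∈ Finset.range n, (b i) ^ 2)
      - 2 * ∑ j ∈ Finset.range n, ∑ i ∈ Finset.range j, b i * b j := by
    have h1 : ∀ j, ∑ i ∈ Finset.range j, (b i - b j) ^ 2
        = (∑ i ∈ Finset.range j, ((b i) ^ 2 + (b j) ^ 2))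
          - 2 * ∑ i ∈ Finset.range j, b i * b j := by
      intro j
      rw [Finset.mul_sum, ← Finset.sum_sub_distrib]
      exact Finset.sum_congr rfl fun i _ => by ring
    rw [hPdef, Finset.sum_congr rfl fun j _ => h1 j, Finset.sum_sub_distrib,
      casorati_key_sum (fun i => (b i) ^ 2) n]
    congr 1
    exact (Finset.mul_sum _ _ _).symm
  have hZ : Z = (∑ i ∈ Finset.range n, (b i) ^ 2)
      - 4 * b n * (∑ i ∈ Finset.range n, b i) + 4 * (n : ℝ) * (b n) ^ 2 := by
    have h1 : ∀ i, (b i - 2 * b n) ^ 2 = (b i) ^ 2 - 4 * b n * b i + 4 * (b n) ^ 2 :=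
      fun i => by ring
    rw [hZdef, Finset.sum_congr rfl fun i _ => h1 i, Finset.sum_add_distrib,
      Finset.sum_sub_distrib, ← Finset.mul_sum, Finset.sum_const, Finset.card_range,
      nsmul_eq_mul]
    ring
  have hsplit : ∑ j ∈ Finset.range (n + 1), ∑ i ∈ Finset.range j, b i * b j
      = (∑ j ∈ Finset.range n, ∑ i ∈ Finset.range j, b i * b j)
        + (∑ i ∈ Finset.range n, b i) * b n := by
    rw [Finset.sum_range_succ, Finset.sum_mul]
  have hE : ((2 * ((n : ℕ) + 1 : ℝ) - 3) / 2) * (∑ i ∈ Finset.range (n + 1 - 1), (b i) ^ 2)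
        + 2 * (((n : ℕ) + 1 : ℝ) - 1) * (b (n + 1 - 1)) ^ 2
        - 2 * ∑ j ∈ Finset.range (n + 1), ∑ i ∈ Finset.range j, b i * b j
      = P + (1 / 2) * Z := by
    rw [hn, hsplit, hP, hZ]
    ring
  have hPnn : 0 ≤ P := Finset.sum_nonneg fun j _ => Finset.sum_nonneg fun i _ => sq_nonneg _
  have hZnn : 0 ≤ Z := Finset.sum_nonneg fun i _ => sq_nonneg _
  push_cast at hE ⊢
  constructor
  · linarith
  · constructor
    · intro h0
      have hZ0 : Z = 0 := by linarith
      intro i hi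
      have hi' : i ∈ Finset.range n := Finset.mem_range.mpr (by omega)
      have := (Finset.sum_eq_zero_iff_of_nonneg (fun i _ => sq_nonneg (b i - 2 * b n))).mp
        hZ0 i hi'
      have h2 : b i - 2 * b n = 0 := by
        have := sq_eq_zero_iff.mp this
        exact this
      show b i = 2 * b n
      linarith
    · intro h
      have h' : ∀ i < n, b i = 2 * b n := fun i hi => h i (by omega)
      have hZ0 : Z = 0 := Finset.sum_eq_zero fun i hi => by
        rw [h' i (Finset.mem_range.mp hi)]; ring
      have hP0 : P = 0 := Finset.sum_eq_zero fun j hj => Finset.sum_eq_zero fun i hi => by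
        have hjn := Finset.mem_range.mp hj
        have hij := Finset.mem_range.mp hi
        rw [h' i (by omega), h' j hjn]; ring
      linarith
end

section
/- Let r ≥ 3 be an integer, F a real inner product space, and B_{ij} ∈ F for 1 ≤ i, j ≤ r vectors with B_{ij} = B_{ji} for all i, j. Then (2r − 1) Σ_{i,j=1}^{r} ‖B_{ij}‖² − ((2r − 1)/2) Σ_{i,j=1}^{r−1} ‖B_{ij}‖² ≥ ‖ Σ_{i=1}^{r} B_{ii} ‖², with equality if and only if B_{ij} = 0 for all i ≠ j and B_{11} = B_{22} = ⋯ = B_{r−1,r−1} = 2 B_{rr}. -/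
open Finset
open scoped RealInnerProductSpace

section Aux

variable {F : Type*} [NormedAddCommGroup F] [InnerProductSpace ℝ F]

private lemma casorati_norm_sum_sq (n : ℕ) (d : ℕ → F) :
    ‖∑ i ∈ range n, d i‖ ^ 2 = ∑ i ∈ range n, ∑ j ∈ range n, ⟪d i, d j⟫ := by
  rw [← real_inner_self_eq_norm_sq, sum_inner]
  exact Finset.sum_congr rfl fun i _ => inner_sum _ _ _

private lemma casorati_diag_split (n : ℕ) (g : ℕ → ℕ → ℝ) :
    ∑ i ∈ range n, ∑ j ∈ range n, g i j
      = (∑ i ∈ range n, g i i)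
        + ∑ i ∈ range n, ∑ j ∈ range n, (if i = j then 0 else g i j) := by
  rw [← Finset.sum_add_distrib]
  refine Finset.sum_congr rfl fun i hi => ?_
  have h1 : ∑ j ∈ range n, g i j
      = ∑ j ∈ range n, ((if i = j then g i j else 0) + (if i = j then 0 else g i j)) := by
    refine Finset.sum_congr rfl fun j _ => ?_
    split <;> simp
  rw [h1, Finset.sum_add_distrib, Finset.sum_ite_eq]
  simp [hi]

private lemma casorati_sum3 {n : ℕ} (f g h : ℕ → ℝ) :
    ∑ j ∈ range n, (f j - g j + h j)
      = (∑ j ∈ range n, f j) - (∑ j ∈ range n, g j) + ∑ j ∈ range n, h j := by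
  simp [Finset.sum_add_distrib, Finset.sum_sub_distrib]

end Aux

/-- Nonnegativity of the polynomial `𝒬` in the proof of Theorem 2.1, for a symmetric
system of vectors `B i j` in a real inner product space. -/
theorem casorati_Q_nonneg
    (r : ℕ) (hr : 3 ≤ r)
    {F : Type*} [NormedAddCommGroup F] [InnerProductSpace ℝ F]
    (B : ℕ → ℕ → F) (hB : ∀ i < r, ∀ j < r, B i j = B j i) :
    ‖∑ i ∈ Finset.range r, B i i‖ ^ 2
      ≤ (2 * (r : ℝ) - 1) *
          (∑ i ∈ Finset.range r, ∑ j ∈ Finset.range r, ‖B i j‖ ^ 2)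
        - ((2 * (r : ℝ) - 1) / 2) *
          (∑ i ∈ Finset.range (r - 1), ∑ j ∈ Finset.range (r - 1), ‖B i j‖ ^ 2)
    ∧ (‖∑ i ∈ Finset.range r, B i i‖ ^ 2
        = (2 * (r : ℝ) - 1) *
            (∑ i ∈ Finset.range r, ∑ j ∈ Finset.range r, ‖B i j‖ ^ 2)
          - ((2 * (r : ℝ) - 1) / 2) *
            (∑ i ∈ Finset.range (r - 1), ∑ j ∈ Finset.range (r - 1), ‖B i j‖ ^ 2)
      ↔ (∀ i < r, ∀ j < r, i ≠ j → B i j = 0)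
        ∧ ∀ i < r - 1, B i i = (2 : ℝ) • B (r - 1) (r - 1)) := by
  obtain ⟨m, rfl⟩ : ∃ m, r = m + 1 := ⟨r - 1, by omega⟩
  simp only [Nat.add_sub_cancel]
  set SD := ∑ i ∈ range m, ‖B i i‖ ^ 2 with hSD
  set H := ∑ i ∈ range m, ⟪B i i, B m m⟫ with hH
  set IP := ∑ i ∈ range m, ∑ j ∈ range m, ⟪B i i, B j j⟫ with hIP
  set O := ∑ i ∈ range m, ∑ j ∈ range m, (if i = j then (0:ℝ) else ‖B i j‖ ^ 2) with hO
  set M := ∑ i ∈ range m, ‖B i m‖ ^ 2 with hM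
  set E := ∑ i ∈ range m, ‖B i i - (2:ℝ) • B m m‖ ^ 2 with hE
  set P := ∑ i ∈ range m, ∑ j ∈ range m, ‖B i i - B j j‖ ^ 2 with hP
  -- expansion of P
  have hPexp : P = 2 * (m:ℝ) * SD - 2 * IP := by
    rw [hP]
    have h1 : ∀ i ∈ range m, ∑ j ∈ range m, ‖B i i - B j j‖ ^ 2
        = (m:ℝ) * ‖B i i‖ ^ 2 - 2 * (∑ j ∈ range m, ⟪B i i, B j j⟫) + SD := by
      intro i _
      have h2 : ∑ j ∈ range m, ‖B i i - B j j‖ ^ 2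
          = ∑ j ∈ range m, (‖B i i‖ ^ 2 - 2 * ⟪B i i, B j j⟫ + ‖B j j‖ ^ 2) :=
        Finset.sum_congr rfl fun j _ => norm_sub_sq_real _ _
      rw [h2, casorati_sum3, Finset.sum_const, card_range, nsmul_eq_mul,
        ← Finset.mul_sum, ← hSD]
    rw [Finset.sum_congr rfl h1, casorati_sum3, ← Finset.mul_sum, ← Finset.mul_sum,
      Finset.sum_const, card_range, nsmul_eq_mul, ← hSD, ← hIP]
    ring
  -- expansion of E
  have hEexp : E = SD - 4 * H + 4 * (m:ℝ) * ‖B m m‖ ^ 2 := by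
    rw [hE]
    have h1 : ∀ i ∈ range m, ‖B i i - (2:ℝ) • B m m‖ ^ 2
        = ‖B i i‖ ^ 2 - 4 * ⟪B i i, B m m⟫ + 4 * ‖B m m‖ ^ 2 := by
      intro i _
      rw [norm_sub_sq_real, real_inner_smul_right, norm_smul]
      simp [Real.norm_ofNat]
      ring
    rw [Finset.sum_congr rfl h1, casorati_sum3, Finset.sum_const, card_range,
      nsmul_eq_mul, ← Finset.mul_sum, ← hSD, ← hH]
    ring
  -- splitting of the big square sum
  have hSsplit : ∑ i ∈ range (m+1), ∑ j ∈ range (m+1), ‖B i j‖ ^ 2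
      = (SD + O) + 2 * M + ‖B m m‖ ^ 2 := by
    rw [Finset.sum_range_succ]
    have h1 : ∑ i ∈ range m, ∑ j ∈ range (m+1), ‖B i j‖ ^ 2
        = (∑ i ∈ range m, ∑ j ∈ range m, ‖B i j‖ ^ 2) + M := by
      rw [hM, ← Finset.sum_add_distrib]
      exact Finset.sum_congr rfl fun i hi => Finset.sum_range_succ _ _
    have h2 : ∑ j ∈ range (m+1), ‖B m j‖ ^ 2 = M + ‖B m m‖ ^ 2 := by
      rw [Finset.sum_range_succ, hM]
      congr 1
      refine Finset.sum_congr rfl fun j hj => ?_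
      rw [hB m (by omega) j (by simp at hj; omega)]
    rw [h1, h2, casorati_diag_split m (fun i j => ‖B i j‖ ^ 2), ← hSD, ← hO]
    ring
  -- the norm of the trace
  have hN : ‖∑ i ∈ range (m+1), B i i‖ ^ 2 = IP + 2 * H + ‖B m m‖ ^ 2 := by
    rw [casorati_norm_sum_sq, Finset.sum_range_succ]
    have h1 : ∑ i ∈ range m, ∑ j ∈ range (m+1), ⟪B i i, B j j⟫ = IP + H := by
      rw [hIP, hH, ← Finset.sum_add_distrib]
      exact Finset.sum_congr rfl fun i hi => Finset.sum_range_succ _ _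
    have h2 : ∑ j ∈ range (m+1), ⟪B m m, B j j⟫ = H + ‖B m m‖ ^ 2 := by
      rw [Finset.sum_range_succ, real_inner_self_eq_norm_sq, hH]
      congr 1
      exact Finset.sum_congr rfl fun j _ => real_inner_comm _ _
    rw [h1, h2]
    ring
  -- the key identity
  have key : (2 * ((m:ℕ)+1 : ℝ) - 1) *
        (∑ i ∈ range (m+1), ∑ j ∈ range (m+1), ‖B i j‖ ^ 2)
      - ((2 * ((m:ℕ)+1 : ℝ) - 1) / 2) *
        (∑ i ∈ range m, ∑ j ∈ range m, ‖B i j‖ ^ 2)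
      - ‖∑ i ∈ range (m+1), B i i‖ ^ 2
      = ((2 * (m:ℝ) + 1) / 2) * O + 2 * (2 * (m:ℝ) + 1) * M + (1/2) * E + (1/2) * P := by
    have hS' : ∑ i ∈ range m, ∑ j ∈ range m, ‖B i j‖ ^ 2 = SD + O := by
      rw [casorati_diag_split m (fun i j => ‖B i j‖ ^ 2), ← hSD, ← hO]
    rw [hSsplit, hS', hN, hEexp, hPexp]
    ring
  have hm0 : (0:ℝ) ≤ (m:ℝ) := Nat.cast_nonneg m
  have hO0 : 0 ≤ O := by
    rw [hO]
    refine Finset.sum_nonneg fun i _ => Finset.sum_nonneg fun j _ => ?_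
    split <;> positivity
  have hM0 : 0 ≤ M := by rw [hM]; positivity
  have hE0 : 0 ≤ E := by rw [hE]; positivity
  have hP0 : 0 ≤ P := by
    rw [hP]
    exact Finset.sum_nonneg fun i _ => Finset.sum_nonneg fun j _ => by positivity
  have c1 : (0:ℝ) < (2 * (m:ℝ) + 1) / 2 := by positivity
  have c2 : (0:ℝ) < 2 * (2 * (m:ℝ) + 1) := by positivity
  have t1 : 0 ≤ ((2 * (m:ℝ) + 1) / 2) * O := mul_nonneg c1.le hO0
  have t2 : 0 ≤ 2 * (2 * (m:ℝ) + 1) * M := mul_nonneg c2.le hM0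
  have t3 : 0 ≤ (1/2 : ℝ) * E := by linarith
  have t4 : 0 ≤ (1/2 : ℝ) * P := by linarith
  refine ⟨by push_cast at key ⊢; linarith, ?_, ?_⟩
  · -- equality implies conditions
    intro heq
    push_cast at key heq
    have key : (2 * (m:ℝ) + 1) / 2 * O + 2 * (2 * (m:ℝ) + 1) * M + 1 / 2 * E + 1 / 2 * P
        = 0 := by linarith
    have hOz : O = 0 := by
      have h1 : ((2 * (m:ℝ) + 1) / 2) * O = 0 := by linarith
      rcases mul_eq_zero.mp h1 with h | h
      · exact absurd h c1.ne'
      · exact h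
    have hMz : M = 0 := by
      have h1 : 2 * (2 * (m:ℝ) + 1) * M = 0 := by linarith
      rcases mul_eq_zero.mp h1 with h | h
      · exact absurd h c2.ne'
      · exact h
    have hEz : E = 0 := by linarith
    -- diagonal condition
    have hdiag : ∀ i < m, B i i = (2:ℝ) • B m m := by
      intro i hi
      have h1 := (Finset.sum_eq_zero_iff_of_nonneg
        (fun i _ => by positivity : ∀ i ∈ range m, (0:ℝ) ≤ ‖B i i - (2:ℝ) • B m m‖ ^ 2)).mp
        (hE ▸ hEz) i (Finset.mem_range.mpr hi)
      have h2 : ‖B i i - (2:ℝ) • B m m‖ = 0 := by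
        have := sq_eq_zero_iff.mp h1
        simpa using this
      have h3 := norm_eq_zero.mp h2
      exact sub_eq_zero.mp h3
    -- off-diagonal within range m
    have hoffm : ∀ i < m, ∀ j < m, i ≠ j → B i j = 0 := by
      intro i hi j hj hij
      have h1 := (Finset.sum_eq_zero_iff_of_nonneg
        (fun i _ => Finset.sum_nonneg fun j _ => by split <;> positivity)).mp
        (hO ▸ hOz) i (Finset.mem_range.mpr hi)
      have h2 := (Finset.sum_eq_zero_iff_of_nonneg
        (fun j _ => by split <;> positivity)).mp h1 j (Finset.mem_range.mpr hj)
      rw [if_neg hij] at h2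
      have h3 : ‖B i j‖ = 0 := by
        have := sq_eq_zero_iff.mp h2
        simpa using this
      exact norm_eq_zero.mp h3
    -- last column
    have hcol : ∀ i < m, B i m = 0 := by
      intro i hi
      have h1 := (Finset.sum_eq_zero_iff_of_nonneg
        (fun i _ => by positivity : ∀ i ∈ range m, (0:ℝ) ≤ ‖B i m‖ ^ 2)).mp
        (hM ▸ hMz) i (Finset.mem_range.mpr hi)
      have h2 : ‖B i m‖ = 0 := by
        have := sq_eq_zero_iff.mp h1
        simpa using this
      exact norm_eq_zero.mp h2
    refine ⟨?_, hdiag⟩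
    intro i hi j hj hij
    rcases Nat.lt_or_ge i m with hi' | hi'
    · rcases Nat.lt_or_ge j m with hj' | hj'
      · exact hoffm i hi' j hj' hij
      · have : j = m := by omega
        subst this
        exact hcol i hi'
    · have him : i = m := by omega
      rcases Nat.lt_or_ge j m with hj' | hj'
      · rw [him, hB m (by omega) j hj]
        exact hcol j hj'
      · omega
  · -- conditions imply equality
    rintro ⟨h1, h2⟩
    have hOz : O = 0 := by
      rw [hO]
      refine Finset.sum_eq_zero fun i hi => Finset.sum_eq_zero fun j hj => ?_
      simp only [Finset.mem_range] at hi hj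
      by_cases hij : i = j
      · rw [if_pos hij]
      · rw [if_neg hij, h1 i (by omega) j (by omega) hij]
        simp
    have hMz : M = 0 := by
      rw [hM]
      refine Finset.sum_eq_zero fun i hi => ?_
      simp only [Finset.mem_range] at hi
      rw [h1 i (by omega) m (by omega) (by omega)]
      simp
    have hEz : E = 0 := by
      rw [hE]
      refine Finset.sum_eq_zero fun i hi => ?_
      simp only [Finset.mem_range] at hi
      rw [h2 i hi]
      simp
    have hPz : P = 0 := by
      rw [hP]
      refine Finset.sum_eq_zero fun i hi => Finset.sum_eq_zero fun j hj => ?_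
      simp only [Finset.mem_range] at hi hj
      rw [h2 i hi, h2 j hj]
      simp
    rw [hOz, hMz, hEz, hPz] at key
    push_cast at key ⊢
    linarith
end

section
/- Let r ≥ 3 be an integer, E an r-dimensional real inner product space, F a real inner product space, and B : E × E → F a symmetric bilinear map. For a nonzero finite-dimensional subspace L of E of dimension k, set C(L) = (1/k) Σ_{i,j=1}^{k} ‖B(u_i, u_j)‖² for any orthonormal basis (u_1, …, u_k) of L (this value does not depend on the chosen orthonormal basis). Let T = Σ_{i=1}^{r} B(e_i, e_i) for an orthonormal basis (e_1, …, e_r) of E (T is independent of the basis). Then ‖T‖² ≤ r(r−1) · [ 2 C(E) − ((2r−1)/(2r)) · sup { C(L) : L a hyperplane of E } ] + r · C(E). -/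
open Finset

private lemma trace_indep {E F : Type*} [NormedAddCommGroup E] [InnerProductSpace ℝ E]
    [NormedAddCommGroup F] [InnerProductSpace ℝ F] {n : ℕ}
    (B : E →ₗ[ℝ] E →ₗ[ℝ] F) (b e : OrthonormalBasis (Fin n) ℝ E) :
    ∑ i, B (b i) (b i) = ∑ i, B (e i) (e i) := by
  have h : ∀ i, B (b i) (b i)
      = ∑ j, ∑ k, (inner ℝ (e j) (b i) * inner ℝ (e k) (b i) : ℝ) • B (e j) (e k) := by
    intro i
    conv_lhs => rw [← e.sum_repr' (b i)]
    simp only [map_sum, LinearMap.sum_apply, map_smul, LinearMap.smul_apply, Finset.smul_sum,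
      smul_smul]
    rw [Finset.sum_comm]
    exact Finset.sum_congr rfl fun j _ => Finset.sum_congr rfl fun k _ => by rw [mul_comm]
  calc ∑ i, B (b i) (b i)
      = ∑ j, ∑ k, (∑ i, (inner ℝ (e j) (b i) * inner ℝ (b i) (e k) : ℝ)) • B (e j) (e k) := by
        simp_rw [h]
        rw [Finset.sum_comm]
        refine Finset.sum_congr rfl fun j _ => ?_
        rw [Finset.sum_comm]
        refine Finset.sum_congr rfl fun k _ => ?_
        rw [Finset.sum_smul]
        refine Finset.sum_congr rfl fun i _ => ?_
        rw [real_inner_comm (b i) (e k)]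
    _ = ∑ j, ∑ k, (inner ℝ (e j) (e k) : ℝ) • B (e j) (e k) := by
        simp_rw [b.sum_inner_mul_inner]
    _ = ∑ i, B (e i) (e i) := by
        have he := orthonormal_iff_ite.mp e.orthonormal
        simp [he, ite_smul]

private lemma wcs {m : ℕ} (hm : 1 ≤ m) (a c D : ℝ) (hc : 0 ≤ c) (ha : 0 ≤ a) (hD : 0 ≤ D)
    (h : a ^ 2 ≤ (m : ℝ) * D) :
    (a + c) ^ 2 ≤ ((2 * (m : ℝ) + 1) / 2) * D + (2 * (m : ℝ) + 1) * c ^ 2 := by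
  have hm' : (1 : ℝ) ≤ (m : ℝ) := by exact_mod_cast hm
  nlinarith [sq_nonneg (a - 2 * (m : ℝ) * c), mul_nonneg ha hc, sq_nonneg (a + c), sq_nonneg c]

/-- Algebraic core of the second inequality of Theorem 2.1: for a symmetric bilinear map
`B` on an `r`-dimensional real inner product space `E` with values in a real inner
product space `F`, with Casorati curvature `C L` of a subspace `L` computed from any
orthonormal basis of `L`, the squared norm of the trace of `B` is bounded using the
supremum of the Casorati curvatures of the hyperplanes of `E`. -/
theorem casorati_trace_bound_sup
    (r : ℕ) (hr : 3 ≤ r)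
    {E F : Type*} [NormedAddCommGroup E] [InnerProductSpace ℝ E]
    [NormedAddCommGroup F] [InnerProductSpace ℝ F]
    [FiniteDimensional ℝ E] (hdim : Module.finrank ℝ E = r)
    (B : E →ₗ[ℝ] E →ₗ[ℝ] F) (hB : ∀ x y : E, B x y = B y x)
    (C : Submodule ℝ E → ℝ)
    (hC : ∀ (L : Submodule ℝ E) (n : ℕ), 0 < n →
      ∀ u : OrthonormalBasis (Fin n) ℝ L,
        C L = (1 / (n : ℝ)) * ∑ i, ∑ j, ‖B (u i : E) (u j : E)‖ ^ 2)
    (e : OrthonormalBasis (Fin r) ℝ E) :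
    ‖∑ i, B (e i) (e i)‖ ^ 2
      ≤ (r : ℝ) * ((r : ℝ) - 1) *
          (2 * C ⊤
            - ((2 * (r : ℝ) - 1) / (2 * (r : ℝ))) *
                sSup {x : ℝ | ∃ L : Submodule ℝ E, Module.finrank ℝ L = r - 1 ∧ C L = x})
        + (r : ℝ) * C ⊤ := by
  obtain ⟨m, rfl⟩ : ∃ m, r = m + 1 := ⟨r - 1, by omega⟩
  have hm : 2 ≤ m := by omega
  have hm0 : (0 : ℝ) < (m : ℝ) := by exact_mod_cast Nat.lt_of_lt_of_le Nat.zero_lt_two hm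
  have hm1 : ((m : ℝ) + 1) ≠ 0 := by positivity
  set T := ∑ i, B (e i) (e i) with hTdef
  -- value of C ⊤ through any orthonormal basis of E
  let iso : E ≃ₗᵢ[ℝ] (⊤ : Submodule ℝ E) :=
    { toLinearEquiv := (Submodule.topEquiv (R := ℝ) (M := E)).symm,
      norm_map' := fun _ => rfl }
  have hCtop : ∀ b : OrthonormalBasis (Fin (m + 1)) ℝ E,
      C ⊤ = (1 / ((m : ℝ) + 1)) * ∑ i, ∑ j, ‖B (b i) (b j)‖ ^ 2 := by
    intro b
    have := hC ⊤ (m + 1) (by omega) (b.map iso)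
    have hiso : ∀ x : E, ((iso x : (⊤ : Submodule ℝ E)) : E) = x := fun _ => rfl
    simpa [OrthonormalBasis.map_apply, hiso] using this
  -- the key per-hyperplane estimate
  have key : ∀ L : Submodule ℝ E, Module.finrank ℝ L = m →
      (m : ℝ) * (2 * (m : ℝ) + 1) * C L
        ≤ 2 * ((2 * (m : ℝ) + 1) * ((m : ℝ) + 1) * C ⊤ - ‖T‖ ^ 2) := by
    intro L hL
    have hLrank : Module.finrank ℝ L = m := hL
    let f : OrthonormalBasis (Fin m) ℝ L := (stdOrthonormalBasis ℝ L).reindex (finCongr hLrank)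
    -- extend f to an orthonormal basis of E
    let v : Fin (m + 1) → E := fun i => if h : (i : ℕ) < m then (f ⟨(i : ℕ), h⟩ : E) else 0
    have hvon : Orthonormal ℝ (Set.restrict {i : Fin (m + 1) | (i : ℕ) < m} v) := by
      rw [orthonormal_iff_ite]
      rintro ⟨i, hi⟩ ⟨j, hj⟩
      have hi' : (i : ℕ) < m := hi
      have hj' : (j : ℕ) < m := hj
      have h1 : Set.restrict {i : Fin (m + 1) | (i : ℕ) < m} v ⟨i, hi⟩ = (f ⟨(i : ℕ), hi'⟩ : E) := by
        show v i = _; simp [v, hi']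
      have h2 : Set.restrict {i : Fin (m + 1) | (i : ℕ) < m} v ⟨j, hj⟩ = (f ⟨(j : ℕ), hj'⟩ : E) := by
        show v j = _; simp [v, hj']
      rw [h1, h2, ← Submodule.coe_inner,
        orthonormal_iff_ite.mp f.orthonormal ⟨(i : ℕ), hi'⟩ ⟨(j : ℕ), hj'⟩]
      congr 1
      simp [Fin.ext_iff, Subtype.ext_iff]
    obtain ⟨b, hb⟩ := hvon.exists_orthonormalBasis_extension_of_card_eq
      (by simp [hdim]) 
    have hbf : ∀ i : Fin m, b (Fin.castSucc i) = (f i : E) := by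
      intro i
      have hmem : (Fin.castSucc i : Fin (m + 1)) ∈ {i : Fin (m + 1) | (i : ℕ) < m} := i.isLt
      rw [hb _ hmem]
      simp [v, i.isLt]
    -- sums
    set SL := ∑ i : Fin m, ∑ j : Fin m,
        ‖B (b (Fin.castSucc i)) (b (Fin.castSucc j))‖ ^ 2 with hSLdef
    set Sfull := ∑ i : Fin (m + 1), ∑ j : Fin (m + 1), ‖B (b i) (b j)‖ ^ 2 with hSfulldef
    set D := ∑ i : Fin m, ‖B (b (Fin.castSucc i)) (b (Fin.castSucc i))‖ ^ 2 with hDdef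
    set q := ‖B (b (Fin.last m)) (b (Fin.last m))‖ ^ 2 with hqdef
    have hCL : C L = (1 / (m : ℝ)) * SL := by
      rw [hC L m (by omega) f, hSLdef]
      congr 1
      exact Finset.sum_congr rfl fun i _ => Finset.sum_congr rfl fun j _ => by
        rw [hbf i, hbf j]
    have hCT : C ⊤ = (1 / ((m : ℝ) + 1)) * Sfull := hCtop b
    have hTb : T = ∑ i, B (b i) (b i) := (trace_indep B b e).symm
    -- Cauchy-Schwarz step
    have hTD : ‖T‖ ^ 2 ≤ ((2 * (m : ℝ) + 1) / 2) * D + (2 * (m : ℝ) + 1) * q := by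
      rw [hTb, Fin.sum_univ_castSucc]
      set a := ‖∑ i : Fin m, B (b (Fin.castSucc i)) (b (Fin.castSucc i))‖ with hadef
      have ha2 : a ^ 2 ≤ (m : ℝ) * D := by
        have h1 : a ≤ ∑ i : Fin m, ‖B (b (Fin.castSucc i)) (b (Fin.castSucc i))‖ :=
          norm_sum_le _ _
        have h2 : (∑ i : Fin m, ‖B (b (Fin.castSucc i)) (b (Fin.castSucc i))‖) ^ 2
            ≤ (m : ℝ) * D := by
          have := sq_sum_le_card_mul_sum_sq
            (s := (Finset.univ : Finset (Fin m)))
            (f := fun i => ‖B (b (Fin.castSucc i)) (b (Fin.castSucc i))‖)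
          simpa [hDdef] using this
        calc a ^ 2 ≤ (∑ i : Fin m, ‖B (b (Fin.castSucc i)) (b (Fin.castSucc i))‖) ^ 2 := by
              apply pow_le_pow_left₀ (norm_nonneg _) h1
          _ ≤ (m : ℝ) * D := h2
      calc ‖(∑ i : Fin m, B (b (Fin.castSucc i)) (b (Fin.castSucc i)))
              + B (b (Fin.last m)) (b (Fin.last m))‖ ^ 2
          ≤ (a + ‖B (b (Fin.last m)) (b (Fin.last m))‖) ^ 2 := by
            apply pow_le_pow_left₀ (norm_nonneg _) (norm_add_le _ _)
        _ ≤ ((2 * (m : ℝ) + 1) / 2) * D + (2 * (m : ℝ) + 1) * q := by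
            rw [hqdef]
            exact wcs (by omega) a _ D (norm_nonneg _) (norm_nonneg _)
              (Finset.sum_nonneg fun i _ => by positivity) ha2
    have hDSL : D ≤ SL := by
      rw [hDdef, hSLdef]
      refine Finset.sum_le_sum fun i _ => ?_
      exact Finset.single_le_sum (f := fun j => ‖B (b (Fin.castSucc i)) (b (Fin.castSucc j))‖ ^ 2)
        (fun j _ => by positivity) (Finset.mem_univ i)
    have hSplit : SL + q ≤ Sfull := by
      have hexp : Sfull = (∑ i : Fin m, (∑ j : Fin m,
            ‖B (b (Fin.castSucc i)) (b (Fin.castSucc j))‖ ^ 2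
            + ‖B (b (Fin.castSucc i)) (b (Fin.last m))‖ ^ 2))
          + ((∑ j : Fin m, ‖B (b (Fin.last m)) (b (Fin.castSucc j))‖ ^ 2) + q) := by
        rw [hSfulldef, Fin.sum_univ_castSucc]
        congr 1
        · exact Finset.sum_congr rfl fun i _ => by rw [Fin.sum_univ_castSucc]
        · rw [Fin.sum_univ_castSucc, hqdef]
      rw [hexp, Finset.sum_add_distrib, hSLdef]
      have h1 : (0 : ℝ) ≤ ∑ i : Fin m, ‖B (b (Fin.castSucc i)) (b (Fin.last m))‖ ^ 2 :=
        Finset.sum_nonneg fun i _ => by positivity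
      have h2 : (0 : ℝ) ≤ ∑ j : Fin m, ‖B (b (Fin.last m)) (b (Fin.castSucc j))‖ ^ 2 :=
        Finset.sum_nonneg fun j _ => by positivity
      linarith
    -- combine
    have h5 : ‖T‖ ^ 2 ≤ ((2 * (m : ℝ) + 1) / 2) * SL + (2 * (m : ℝ) + 1) * q := by
      have hco : (0 : ℝ) ≤ (2 * (m : ℝ) + 1) / 2 := by positivity
      nlinarith [mul_le_mul_of_nonneg_left hDSL hco]
    have h7 := mul_le_mul_of_nonneg_left hSplit (show (0 : ℝ) ≤ 2 * (m : ℝ) + 1 by positivity)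
    have hcancel1 : (m : ℝ) * (2 * (m : ℝ) + 1) * ((1 / (m : ℝ)) * SL)
        = (2 * (m : ℝ) + 1) * SL := by field_simp
    have hcancel2 : (2 * (m : ℝ) + 1) * ((m : ℝ) + 1) * ((1 / ((m : ℝ) + 1)) * Sfull)
        = (2 * (m : ℝ) + 1) * Sfull := by field_simp
    rw [hCL, hCT, hcancel1, hcancel2]
    linarith
  -- the set of hyperplane Casorati curvatures
  have hset : {x : ℝ | ∃ L : Submodule ℝ E, Module.finrank ℝ L = m + 1 - 1 ∧ C L = x}
      = {x : ℝ | ∃ L : Submodule ℝ E, Module.finrank ℝ L = m ∧ C L = x} := by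
    simp
  rw [hset]
  set st := {x : ℝ | ∃ L : Submodule ℝ E, Module.finrank ℝ L = m ∧ C L = x} with hstdef
  have hne : st.Nonempty := by
    have he0 : e 0 ≠ 0 := by
      intro h
      have := e.orthonormal.1 0
      rw [h] at this
      simp at this
    have hsp : Module.finrank ℝ (ℝ ∙ (e 0)) = 1 := finrank_span_singleton he0
    have hadd := Submodule.finrank_add_finrank_orthogonal (K := (ℝ ∙ (e 0)))
    rw [hsp, hdim] at hadd
    exact ⟨C ((ℝ ∙ (e 0))ᗮ), (ℝ ∙ (e 0))ᗮ, by omega, rfl⟩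
  set bnd := 2 * ((2 * (m : ℝ) + 1) * ((m : ℝ) + 1) * C ⊤ - ‖T‖ ^ 2)
      / ((m : ℝ) * (2 * (m : ℝ) + 1)) with hbnddef
  have hpos : (0 : ℝ) < (m : ℝ) * (2 * (m : ℝ) + 1) := by positivity
  have hsup : sSup st ≤ bnd := by
    refine csSup_le hne ?_
    rintro x ⟨L, hL, rfl⟩
    rw [hbnddef, le_div_iff₀ hpos]
    calc C L * ((m : ℝ) * (2 * (m : ℝ) + 1))
        = (m : ℝ) * (2 * (m : ℝ) + 1) * C L := by ring
      _ ≤ 2 * ((2 * (m : ℝ) + 1) * ((m : ℝ) + 1) * C ⊤ - ‖T‖ ^ 2) := key L hL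
  have hkey2 : (m : ℝ) * (2 * (m : ℝ) + 1) * sSup st
      ≤ 2 * ((2 * (m : ℝ) + 1) * ((m : ℝ) + 1) * C ⊤ - ‖T‖ ^ 2) := by
    have := mul_le_mul_of_nonneg_left hsup (le_of_lt hpos)
    calc (m : ℝ) * (2 * (m : ℝ) + 1) * sSup st
        ≤ (m : ℝ) * (2 * (m : ℝ) + 1) * bnd := this
      _ = 2 * ((2 * (m : ℝ) + 1) * ((m : ℝ) + 1) * C ⊤ - ‖T‖ ^ 2) := by
          rw [hbnddef]; field_simp
  have hgoal : ((m + 1 : ℕ) : ℝ) * (((m + 1 : ℕ) : ℝ) - 1) *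
        (2 * C ⊤ - ((2 * ((m + 1 : ℕ) : ℝ) - 1) / (2 * ((m + 1 : ℕ) : ℝ))) * sSup st)
        + ((m + 1 : ℕ) : ℝ) * C ⊤
      = 2 * ((m : ℝ) + 1) * (m : ℝ) * C ⊤ + ((m : ℝ) + 1) * C ⊤
        - ((m : ℝ) * (2 * (m : ℝ) + 1) / 2) * sSup st := by
    push_cast
    field_simp
    ring
  rw [hgoal]
  linarith
end
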